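/- Let m ≥ n ≥ 1 and k ≤ −1 be integers, and let p = gcd(m−k, n−k). Then (π/(2√2·p)) · ∫₀^{2π} (4k(m−n)cos(2x) + (m+n−k)²) / √(2mn − k(m+n) + k(m−n)cos(2x)) dx > 4π²/(3√3). That is, the energy E(Σ_{m,n,k}) of the Hamiltonian-minimal Lagrangian torus Σ_{m,n,k} exceeds the energy E(Σ_Cl) = 4π²/(3√3) of the Clifford torus. -/

import Mathlib

open Real intervalIntegral

set_option maxHeartbeats 1000000 in
/-- The energy of the Hamiltonian-minimal Lagrangian torus `Σ_{m,n,k}` (with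
`m ≥ n ≥ 1`, `k ≤ −1`, `p = gcd(m−k, n−k)`) exceeds the energy `4π²/(3√3)` of the
Clifford torus. -/
theorem energy_of_mnk_torus_gt_clifford
    (m n k : ℤ) (hmn : n ≤ m) (hn : 1 ≤ n) (hk : k ≤ -1)
    (p : ℕ) (hp : p = Int.gcd (m - k) (n - k)) :
    (π / (2 * Real.sqrt 2 * (p : ℝ))) *
      ∫ x in (0:ℝ)..(2 * π),
        (4 * (k : ℝ) * ((m : ℝ) - (n : ℝ)) * Real.cos (2 * x)
          + ((m : ℝ) + (n : ℝ) - (k : ℝ))^2) /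
        Real.sqrt (2 * (m : ℝ) * (n : ℝ) - (k : ℝ) * ((m : ℝ) + (n : ℝ))
          + (k : ℝ) * ((m : ℝ) - (n : ℝ)) * Real.cos (2 * x))
      > 4 * π^2 / (3 * Real.sqrt 3) := by
  set M : ℝ := (m : ℝ) with hMdef
  set Nr : ℝ := (n : ℝ) with hNdef
  set K : ℝ := (k : ℝ) with hKdef
  have hN1 : (1:ℝ) ≤ Nr := by rw [hNdef]; exact_mod_cast hn
  have hMN : Nr ≤ M := by rw [hNdef, hMdef]; exact_mod_cast hmn
  have hK : K ≤ -1 := by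
    rw [hKdef]
    have : ((k:ℝ)) ≤ ((-1:ℤ):ℝ) := Int.cast_le.mpr hk
    simpa using this
  have hM1 : (1:ℝ) ≤ M := le_trans hN1 hMN
  have hT2 : (2:ℝ) ≤ Nr - K := by linarith
  have hM0 : (0:ℝ) < M := by linarith
  have hT0 : (0:ℝ) < Nr - K := by linarith
  -- facts about p
  have hpdvd : (p:ℤ) ∣ (n - k) := by rw [hp]; exact Int.gcd_dvd_right _ _
  have hpT' : (p:ℤ) ≤ n - k := Int.le_of_dvd (by omega) hpdvd
  have hpT : (p:ℝ) ≤ Nr - K := by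
    rw [hNdef, hKdef]
    have : (((p:ℤ)):ℝ) ≤ ((n - k : ℤ):ℝ) := Int.cast_le.mpr hpT'
    push_cast at this
    linarith
  have hp0 : 0 < p := by
    rcases Nat.eq_zero_or_pos p with h | h
    · exfalso
      rw [h] at hpdvd
      simp only [Nat.cast_zero, zero_dvd_iff] at hpdvd
      omega
    · exact h
  have hp0' : (0:ℝ) < (p:ℝ) := by exact_mod_cast hp0
  -- pointwise facts about the integrand
  have hc1 : ∀ x : ℝ, Real.cos (2*x) ≤ 1 := fun x => Real.cos_le_one _
  have hc2 : ∀ x : ℝ, -1 ≤ Real.cos (2*x) := fun x => Real.neg_one_le_cos _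
  have hb : K*(M-Nr) ≤ 0 := mul_nonpos_of_nonpos_of_nonneg (by linarith) (by linarith)
  have hspos : ∀ x : ℝ, 0 < 2*M*Nr - K*(M+Nr) + K*(M-Nr)*Real.cos (2*x) := by
    intro x
    nlinarith [mul_nonneg (show (0:ℝ) ≤ -(K*(M-Nr)) by linarith)
        (show (0:ℝ) ≤ 1 - Real.cos (2*x) by linarith [hc1 x]),
      mul_nonneg (show (0:ℝ) ≤ Nr - 1 by linarith) (show (0:ℝ) ≤ M - K - 2 by linarith)]
  have hnum : ∀ x : ℝ, 0 < 4*K*(M-Nr)*Real.cos (2*x) + (M+Nr-K)^2 := by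
    intro x
    nlinarith [mul_nonneg (show (0:ℝ) ≤ -(K*(M-Nr)) by linarith)
        (show (0:ℝ) ≤ 1 - Real.cos (2*x) by linarith [hc1 x]),
      sq_nonneg (M+Nr+K), mul_nonneg (show (0:ℝ) ≤ Nr - 1 by linarith)
        (show (0:ℝ) ≤ -K - 1 by linarith)]
  have hsub : ∀ x : ℝ, 2*M*Nr - K*(M+Nr) + K*(M-Nr)*Real.cos (2*x) ≤ 2*M*(Nr-K) := by
    intro x
    nlinarith [mul_nonneg (show (0:ℝ) ≤ -(K*(M-Nr)) by linarith)
      (show (0:ℝ) ≤ 1 + Real.cos (2*x) by linarith [hc2 x])]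
  -- pointwise lower bound for the integrand
  have hpoint : ∀ x ∈ Set.Icc (0:ℝ) (2*π),
      (4*K*(M-Nr)*Real.cos (2*x) + (M+Nr-K)^2) / Real.sqrt (2*M*(Nr-K))
      ≤ (4*K*(M-Nr)*Real.cos (2*x) + (M+Nr-K)^2) /
        Real.sqrt (2*M*Nr - K*(M+Nr) + K*(M-Nr)*Real.cos (2*x)) := by
    intro x _
    gcongr
    · exact (hnum x).le
    · exact Real.sqrt_pos.mpr (hspos x)
    · exact hsub x
  -- integrability
  have hconts : Continuous (fun x : ℝ => 2*M*Nr - K*(M+Nr) + K*(M-Nr)*Real.cos (2*x)) := by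
    fun_prop
  have hcontnum : Continuous (fun x : ℝ => 4*K*(M-Nr)*Real.cos (2*x) + (M+Nr-K)^2) := by
    fun_prop
  have hf_int : IntervalIntegrable
      (fun x : ℝ => (4*K*(M-Nr)*Real.cos (2*x) + (M+Nr-K)^2) /
        Real.sqrt (2*M*Nr - K*(M+Nr) + K*(M-Nr)*Real.cos (2*x))) MeasureTheory.volume 0 (2*π) := by
    apply Continuous.intervalIntegrable
    exact hcontnum.div (Real.continuous_sqrt.comp hconts)
      (fun x => ne_of_gt (Real.sqrt_pos.mpr (hspos x)))
  have hg_int : IntervalIntegrable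
      (fun x : ℝ => (4*K*(M-Nr)*Real.cos (2*x) + (M+Nr-K)^2) /
        Real.sqrt (2*M*(Nr-K))) MeasureTheory.volume 0 (2*π) := by
    apply Continuous.intervalIntegrable
    exact hcontnum.div_const _
  -- integral of cos (2x) over [0, 2π] is 0
  have hcosint : (∫ x in (0:ℝ)..(2*π), Real.cos (2*x)) = 0 := by
    have hderiv : ∀ x ∈ Set.uIcc (0:ℝ) (2*π),
        HasDerivAt (fun y : ℝ => Real.sin (2*y)/2) (Real.cos (2*x)) x := by
      intro x _
      have h1 : HasDerivAt (fun y : ℝ => 2*y) 2 x := by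
        simpa using (hasDerivAt_id x).const_mul 2
      have h2 := ((Real.hasDerivAt_sin (2*x)).comp x h1).div_const 2
      simpa [mul_comm, mul_div_assoc] using h2
    rw [intervalIntegral.integral_eq_sub_of_hasDerivAt hderiv
      ((by fun_prop : Continuous fun x : ℝ => Real.cos (2*x)).intervalIntegrable _ _)]
    simp [Real.sin_two_mul, Real.sin_two_pi]
  -- value of the lower integral
  have hgval : (∫ x in (0:ℝ)..(2*π),
      (4*K*(M-Nr)*Real.cos (2*x) + (M+Nr-K)^2) / Real.sqrt (2*M*(Nr-K)))
      = 2*π*(M+Nr-K)^2 / Real.sqrt (2*M*(Nr-K)) := by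
    rw [intervalIntegral.integral_div]
    congr 1
    rw [intervalIntegral.integral_add
      ((by fun_prop : Continuous fun x : ℝ => 4*K*(M-Nr)*Real.cos (2*x)).intervalIntegrable _ _)
      (intervalIntegrable_const)]
    rw [intervalIntegral.integral_const_mul, hcosint]
    simp
  -- the integral comparison
  have hmono := intervalIntegral.integral_mono_on
    (by positivity : (0:ℝ) ≤ 2*π) hg_int hf_int hpoint
  rw [hgval] at hmono
  -- square root facts
  have hsM0 : 0 < Real.sqrt M := Real.sqrt_pos.mpr hM0
  have hsT0 : 0 < Real.sqrt (Nr-K) := Real.sqrt_pos.mpr hT0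
  have hs20 : 0 < Real.sqrt 2 := Real.sqrt_pos.mpr (by norm_num)
  have hs30 : 0 < Real.sqrt 3 := Real.sqrt_pos.mpr (by norm_num)
  have eM : Real.sqrt M ^ 2 = M := Real.sq_sqrt hM0.le
  have eT : Real.sqrt (Nr-K) ^ 2 = Nr-K := Real.sq_sqrt hT0.le
  have e3 : Real.sqrt 3 ^ 2 = 3 := Real.sq_sqrt (by norm_num)
  have e2 : Real.sqrt 2 * Real.sqrt 2 = 2 := Real.mul_self_sqrt (by norm_num)
  have hRsplit : Real.sqrt (2*M*(Nr-K)) = Real.sqrt 2 * (Real.sqrt M * Real.sqrt (Nr-K)) := by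
    rw [show 2*M*(Nr-K) = 2*(M*(Nr-K)) by ring, Real.sqrt_mul (by norm_num),
      Real.sqrt_mul hM0.le]
  -- the key AM-GM inequality
  have hkey : 16*(Nr-K)*(Real.sqrt M * Real.sqrt (Nr-K)) ≤ 3*Real.sqrt 3*(M+(Nr-K))^2 := by
    have hA : 0 ≤ 16*(Nr-K)*(Real.sqrt M * Real.sqrt (Nr-K)) := by positivity
    have hB : 0 ≤ 3*Real.sqrt 3*(M+(Nr-K))^2 := by positivity
    have hApow : (16*(Nr-K)*(Real.sqrt M * Real.sqrt (Nr-K)))^2 = 256*M*(Nr-K)^3 := by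
      rw [show (16*(Nr-K)*(Real.sqrt M * Real.sqrt (Nr-K)))^2
        = 16^2*(Nr-K)^2*(Real.sqrt M ^2 * Real.sqrt (Nr-K) ^2) from by ring, eM, eT]
      ring
    have hBpow : (3*Real.sqrt 3*(M+(Nr-K))^2)^2 = 27*(M+(Nr-K))^4 := by
      rw [show (3*Real.sqrt 3*(M+(Nr-K))^2)^2
        = 9*(Real.sqrt 3 ^2)*((M+(Nr-K))^2)^2 from by ring, e3]
      ring
    have hsq : (16*(Nr-K)*(Real.sqrt M * Real.sqrt (Nr-K)))^2
        ≤ (3*Real.sqrt 3*(M+(Nr-K))^2)^2 := by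
      rw [hApow, hBpow]
      have hq : (0:ℝ) ≤ 27*(Nr-K)^2+14*M*(Nr-K)+3*M^2 := by
        nlinarith [mul_pos hM0 hT0, sq_nonneg M, sq_nonneg (Nr-K)]
      have hid : 27*(M+(Nr-K))^4 - 256*M*(Nr-K)^3
          = ((Nr-K)-3*M)^2*(27*(Nr-K)^2+14*M*(Nr-K)+3*M^2) := by ring
      nlinarith [mul_nonneg (sq_nonneg ((Nr-K)-3*M)) hq, hid]
    calc 16*(Nr-K)*(Real.sqrt M * Real.sqrt (Nr-K))
        = Real.sqrt ((16*(Nr-K)*(Real.sqrt M * Real.sqrt (Nr-K)))^2) := (Real.sqrt_sq hA).symm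
      _ ≤ Real.sqrt ((3*Real.sqrt 3*(M+(Nr-K))^2)^2) := Real.sqrt_le_sqrt hsq
      _ = 3*Real.sqrt 3*(M+(Nr-K))^2 := Real.sqrt_sq hB
  -- the final numeric inequality
  have hQ : 0 ≤ Real.sqrt M * Real.sqrt (Nr-K) := by positivity
  have h1 : 16*(p:ℝ)*(Real.sqrt M * Real.sqrt (Nr-K)) ≤ 3*Real.sqrt 3*(M+(Nr-K))^2 := by
    nlinarith [hkey, mul_nonneg (sub_nonneg.2 hpT) hQ]
  have h2 : 16*(p:ℝ)*(Real.sqrt M * Real.sqrt (Nr-K))*π^2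
      < 6*Real.sqrt 3*(M+(Nr-K))^2*π^2 := by
    have hpos : 0 < 3*Real.sqrt 3*(M+(Nr-K))^2*π^2 := by
      have : (0:ℝ) < M+(Nr-K) := by linarith
      positivity
    nlinarith [mul_le_mul_of_nonneg_right h1 (sq_nonneg π)]
  have hfin : 4*π^2/(3*Real.sqrt 3)
      < (π/(2*Real.sqrt 2*(p:ℝ))) * (2*π*(M+Nr-K)^2 / Real.sqrt (2*M*(Nr-K))) := by
    rw [hRsplit, div_mul_div_comm, div_lt_div_iff₀ (by positivity)
      (by positivity)]
    have e : 4*π^2*((2*Real.sqrt 2*(p:ℝ))*(Real.sqrt 2*(Real.sqrt M*Real.sqrt (Nr-K))))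
        = 16*(p:ℝ)*(Real.sqrt M*Real.sqrt (Nr-K))*π^2 := by
      linear_combination 8*π^2*(p:ℝ)*(Real.sqrt M*Real.sqrt (Nr-K)) * e2
    rw [e]
    nlinarith [h2]
  have hCpos : (0:ℝ) < π/(2*Real.sqrt 2*(p:ℝ)) := by positivity
  calc 4*π^2/(3*Real.sqrt 3)
      < (π/(2*Real.sqrt 2*(p:ℝ))) * (2*π*(M+Nr-K)^2 / Real.sqrt (2*M*(Nr-K))) := hfin
    _ ≤ (π/(2*Real.sqrt 2*(p:ℝ))) * ∫ x in (0:ℝ)..(2*π),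
        (4*K*(M-Nr)*Real.cos (2*x) + (M+Nr-K)^2) /
          Real.sqrt (2*M*Nr - K*(M+Nr) + K*(M-Nr)*Real.cos (2*x)) :=
      mul_le_mul_of_nonneg_left hmono hCpos.le
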